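/- The key pointwise identity for L^c û/û (equation (second_order_simp) of the paper): Let E ⊆ ℝ^d be open, let c : E → ℝ^{d×d} be C² with c(x) symmetric positive definite for every x, let p : E → (0,∞) be C², and define ℓ := ∇p/p + c⁻¹ div c, so that p c ℓ = c∇p + p div c. Let φ̂ ∈ C²(E) satisfy ∇·( p c (∇φ̂ − ℓ) )(x) = 0 for all x ∈ E, and set û := exp(φ̂/2). Then for every x ∈ E: (1/(2 û(x))) Σ_{i,j} c_{ij}(x) ∂_i∂_j û(x) = (1/(4 p(x))) Σ_i ∂_i( c∇p + p div c )_i(x) + (1/8) (∇φ̂(x) − ℓ(x))ᵀ c(x) (∇φ̂(x) − ℓ(x)) − (1/8) ℓ(x)ᵀ c(x) ℓ(x). -/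

import Mathlib

open MeasureTheory

/-- The key pointwise identity for `L^c û / û` (equation (second_order_simp)):
if `∇·(p c (∇φ̂ − ℓ)) = 0` on `E` and `û = exp(φ̂/2)`, then
`L^c û/û = (1/(4p)) ∇·(c∇p + p div c) + (1/8)(∇φ̂ − ℓ)ᵀc(∇φ̂ − ℓ) − (1/8) ℓᵀcℓ`. -/
theorem second_order_simp (d : ℕ) (E : Set (Fin d → ℝ)) (hE : IsOpen E)
    (c : (Fin d → ℝ) → Matrix (Fin d) (Fin d) ℝ)
    (hc : ∀ i j, ContDiffOn ℝ 2 (fun y => c y i j) E)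
    (hc_pd : ∀ x ∈ E, (c x).PosDef)
    (p : (Fin d → ℝ) → ℝ) (hp : ContDiffOn ℝ 2 p E) (hp_pos : ∀ x ∈ E, 0 < p x)
    (ℓ : (Fin d → ℝ) → (Fin d → ℝ))
    (hℓ : ∀ x ∈ E, ℓ x = (fun i => fderiv ℝ p x (Pi.single i 1) / p x)
      + (c x)⁻¹.mulVec (fun i => ∑ j, fderiv ℝ (fun z => c z i j) x (Pi.single j 1)))
    (φhat : (Fin d → ℝ) → ℝ) (hφhat : ContDiffOn ℝ 2 φhat E)
    (hEL : ∀ x ∈ E,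
      ∑ i, fderiv ℝ (fun y => p y * ∑ j, c y i j *
        (fderiv ℝ φhat y (Pi.single j 1) - ℓ y j)) x (Pi.single i 1) = 0) :
    ∀ x ∈ E,
      (1 / (2 * Real.exp (φhat x / 2))) *
        ∑ i, ∑ j, c x i j *
          fderiv ℝ (fun y => fderiv ℝ (fun z => Real.exp (φhat z / 2)) y
            (Pi.single j 1)) x (Pi.single i 1)
      = (1 / (4 * p x)) *
          ∑ i, fderiv ℝ (fun y =>
            (∑ j, c y i j * fderiv ℝ p y (Pi.single j 1))
            + p y * ∑ j, fderiv ℝ (fun z => c z i j) y (Pi.single j 1)) x (Pi.single i 1)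
        + (1/8) * ∑ i, ∑ j, (fderiv ℝ φhat x (Pi.single i 1) - ℓ x i) * c x i j *
            (fderiv ℝ φhat x (Pi.single j 1) - ℓ x j)
        - (1/8) * ∑ i, ∑ j, ℓ x i * c x i j * ℓ x j := by
  intro x hx
  have hxE : E ∈ nhds x := hE.mem_nhds hx
  -- basic differentiability
  have dφ : ∀ y ∈ E, DifferentiableAt ℝ φhat y := fun y hy =>
    (hφhat.contDiffAt (hE.mem_nhds hy)).differentiableAt (by norm_num)
  have dp : ∀ y ∈ E, DifferentiableAt ℝ p y := fun y hy =>
    (hp.contDiffAt (hE.mem_nhds hy)).differentiableAt (by norm_num)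
  have dc : ∀ i j, ∀ y ∈ E, DifferentiableAt ℝ (fun z => c z i j) y := fun i j y hy =>
    ((hc i j).contDiffAt (hE.mem_nhds hy)).differentiableAt (by norm_num)
  -- differentiability of directional derivatives at x
  have dd : ∀ (f : (Fin d → ℝ) → ℝ), ContDiffOn ℝ 2 f E → ∀ (v : Fin d → ℝ),
      DifferentiableAt ℝ (fun y => fderiv ℝ f y v) x := by
    intro f hf v
    have h1 : ContDiffAt ℝ 1 (fderiv ℝ f) x :=
      (hf.contDiffAt hxE).fderiv_right (by norm_num)
    exact (h1.differentiableAt (by norm_num)).clm_apply (differentiableAt_const v)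
  -- symmetry of c on E
  have hcsE : ∀ y ∈ E, ∀ i j, c y i j = c y j i := by
    intro y hy i j
    simpa using ((hc_pd y hy).isHermitian.apply i j).symm
  have hcs : ∀ i j, c x i j = c x j i := hcsE x hx
  -- symmetry of derivatives of c at x
  have hPc : ∀ i j, fderiv ℝ (fun z => c z i j) x = fderiv ℝ (fun z => c z j i) x := by
    intro i j
    apply Filter.EventuallyEq.fderiv_eq
    filter_upwards [hxE] with y hy
    exact hcsE y hy i j
  -- the c·ℓ identity
  have hclv : ∀ y ∈ E, ∀ i, ∑ j, c y i j * ℓ y j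
      = (∑ j, c y i j * fderiv ℝ p y (Pi.single j 1)) / p y
        + ∑ j, fderiv ℝ (fun z => c z i j) y (Pi.single j 1) := by
    intro y hy i
    have hdet : IsUnit (c y).det := isUnit_iff_ne_zero.mpr (hc_pd y hy).det_pos.ne'
    have h1 : (c y).mulVec (ℓ y)
        = (fun i => (∑ j, c y i j * fderiv ℝ p y (Pi.single j 1)) / p y)
          + fun i => ∑ j, fderiv ℝ (fun z => c z i j) y (Pi.single j 1) := by
      rw [hℓ y hy, Matrix.mulVec_add, Matrix.mulVec_mulVec,
        Matrix.mul_nonsing_inv _ hdet, Matrix.one_mulVec]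
      congr 1
      ext i
      simp [Matrix.mulVec, dotProduct, Finset.sum_div, mul_div_assoc]
    have h2 := congrFun h1 i
    simpa [Matrix.mulVec, dotProduct] using h2
  -- exp derivative
  have hder : ∀ y ∈ E, HasFDerivAt (fun z => Real.exp (φhat z / 2))
      (Real.exp (φhat y / 2) • ((2:ℝ)⁻¹ • fderiv ℝ φhat y)) y := by
    intro y hy
    have h2 : HasFDerivAt (fun z => φhat z / 2) ((2:ℝ)⁻¹ • fderiv ℝ φhat y) y := by
      simpa [div_eq_inv_mul, smul_eq_mul] using ((dφ y hy).hasFDerivAt.const_mul ((2:ℝ)⁻¹))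
    exact h2.exp
  -- key1 : second derivative of exp(φ/2)
  have key1 : ∀ i j : Fin d,
      fderiv ℝ (fun y => fderiv ℝ (fun z => Real.exp (φhat z / 2)) y
        (Pi.single j 1)) x (Pi.single i 1)
      = Real.exp (φhat x / 2) *
          (fderiv ℝ φhat x (Pi.single i 1) * fderiv ℝ φhat x (Pi.single j 1) / 4
           + fderiv ℝ (fun y => fderiv ℝ φhat y (Pi.single j 1)) x (Pi.single i 1) / 2) := by
    intro i j
    have heq : (fun y => fderiv ℝ (fun z => Real.exp (φhat z / 2)) y (Pi.single j 1))
        =ᶠ[nhds x] fun y => Real.exp (φhat y / 2) *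
          ((2:ℝ)⁻¹ * fderiv ℝ φhat y (Pi.single j 1)) := by
      filter_upwards [hxE] with y hy
      rw [(hder y hy).fderiv]
      simp [smul_eq_mul]
    have h1 : HasFDerivAt (fun y => Real.exp (φhat y / 2))
        (Real.exp (φhat x / 2) • ((2:ℝ)⁻¹ • fderiv ℝ φhat x)) x := hder x hx
    have h2 : HasFDerivAt (fun y => fderiv ℝ φhat y (Pi.single j 1))
        (fderiv ℝ (fun y => fderiv ℝ φhat y (Pi.single j 1)) x) x :=
      (dd φhat hφhat _).hasFDerivAt
    have h3 := h1.fun_mul (h2.const_mul ((2:ℝ)⁻¹))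
    rw [Filter.EventuallyEq.fderiv_eq heq, h3.fderiv]
    simp only [ContinuousLinearMap.add_apply, ContinuousLinearMap.smul_apply, smul_eq_mul]
    ring
  -- differentiability of the components of H and G at x
  have dS : ∀ i, DifferentiableAt ℝ
      (fun y => ∑ j, c y i j * fderiv ℝ φhat y (Pi.single j 1)) x := fun i =>
    DifferentiableAt.fun_sum fun j _ => (dc i j x hx).fun_mul (dd φhat hφhat _)
  have dH : ∀ i, DifferentiableAt ℝ
      (fun y => p y * ∑ j, c y i j * fderiv ℝ φhat y (Pi.single j 1)) x := fun i =>
    (dp x hx).mul (dS i)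
  have dG : ∀ i, DifferentiableAt ℝ
      (fun y => (∑ j, c y i j * fderiv ℝ p y (Pi.single j 1))
        + p y * ∑ j, fderiv ℝ (fun z => c z i j) y (Pi.single j 1)) x := fun i =>
    (DifferentiableAt.fun_sum fun j _ => (dc i j x hx).fun_mul (dd p hp _)).fun_add
      ((dp x hx).fun_mul (DifferentiableAt.fun_sum fun j _ => dd _ (hc i j) _))
  -- F = H - G on E
  have hFi : ∀ i, (fun y => p y * ∑ j, c y i j *
        (fderiv ℝ φhat y (Pi.single j 1) - ℓ y j))
      =ᶠ[nhds x] fun y =>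
        (p y * ∑ j, c y i j * fderiv ℝ φhat y (Pi.single j 1))
        - ((∑ j, c y i j * fderiv ℝ p y (Pi.single j 1))
           + p y * ∑ j, fderiv ℝ (fun z => c z i j) y (Pi.single j 1)) := by
    intro i
    filter_upwards [hxE] with y hy
    have hpy : p y ≠ 0 := (hp_pos y hy).ne'
    have h2 : ∑ j, c y i j * (fderiv ℝ φhat y (Pi.single j 1) - ℓ y j)
        = (∑ j, c y i j * fderiv ℝ φhat y (Pi.single j 1)) - ∑ j, c y i j * ℓ y j := by
      rw [← Finset.sum_sub_distrib]
      exact Finset.sum_congr rfl fun j _ => by ring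
    rw [h2, hclv y hy i]
    field_simp
  -- divergence rewriting: ∑ fderiv G = ∑ fderiv H
  have hHG : (∑ i, fderiv ℝ (fun y =>
        (∑ j, c y i j * fderiv ℝ p y (Pi.single j 1))
        + p y * ∑ j, fderiv ℝ (fun z => c z i j) y (Pi.single j 1)) x (Pi.single i 1))
      = ∑ i, fderiv ℝ (fun y => p y * ∑ j, c y i j * fderiv ℝ φhat y (Pi.single j 1)) x
          (Pi.single i 1) := by
    have h0 := hEL x hx
    have h1 : ∀ i, fderiv ℝ (fun y => p y * ∑ j, c y i j *
        (fderiv ℝ φhat y (Pi.single j 1) - ℓ y j)) x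
        = fderiv ℝ (fun y => p y * ∑ j, c y i j * fderiv ℝ φhat y (Pi.single j 1)) x
          - fderiv ℝ (fun y => (∑ j, c y i j * fderiv ℝ p y (Pi.single j 1))
              + p y * ∑ j, fderiv ℝ (fun z => c z i j) y (Pi.single j 1)) x := by
      intro i
      rw [Filter.EventuallyEq.fderiv_eq (hFi i)]
      exact fderiv_sub (dH i) (dG i)
    calc (∑ i, fderiv ℝ (fun y =>
          (∑ j, c y i j * fderiv ℝ p y (Pi.single j 1))
          + p y * ∑ j, fderiv ℝ (fun z => c z i j) y (Pi.single j 1)) x (Pi.single i 1))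
        = ∑ i, (fderiv ℝ (fun y => p y * ∑ j, c y i j * fderiv ℝ φhat y (Pi.single j 1)) x
            (Pi.single i 1)
          - fderiv ℝ (fun y => p y * ∑ j, c y i j *
              (fderiv ℝ φhat y (Pi.single j 1) - ℓ y j)) x (Pi.single i 1)) := by
          refine Finset.sum_congr rfl fun i _ => ?_
          rw [h1 i]
          simp
      _ = (∑ i, fderiv ℝ (fun y => p y * ∑ j, c y i j * fderiv ℝ φhat y (Pi.single j 1)) x
            (Pi.single i 1))
          - ∑ i, fderiv ℝ (fun y => p y * ∑ j, c y i j *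
              (fderiv ℝ φhat y (Pi.single j 1) - ℓ y j)) x (Pi.single i 1) :=
          Finset.sum_sub_distrib _ _
      _ = _ := by rw [h0, sub_zero]
  -- expansion of fderiv H
  have hHexp : ∀ i, fderiv ℝ (fun y => p y * ∑ j, c y i j * fderiv ℝ φhat y (Pi.single j 1)) x
        (Pi.single i 1)
      = p x * (∑ j, (c x i j *
            fderiv ℝ (fun y => fderiv ℝ φhat y (Pi.single j 1)) x (Pi.single i 1)
          + fderiv ℝ φhat x (Pi.single j 1) * fderiv ℝ (fun z => c z i j) x (Pi.single i 1)))
        + (∑ j, c x i j * fderiv ℝ φhat x (Pi.single j 1)) * fderiv ℝ p x (Pi.single i 1) := by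
    intro i
    rw [fderiv_fun_mul (dp x hx) (dS i)]
    simp only [ContinuousLinearMap.add_apply, ContinuousLinearMap.smul_apply, smul_eq_mul]
    congr 2
    rw [fderiv_fun_sum (fun j _ => (dc i j x hx).fun_mul (dd φhat hφhat _))]
    simp only [ContinuousLinearMap.sum_apply]
    refine Finset.sum_congr rfl fun j _ => ?_
    rw [fderiv_fun_mul (dc i j x hx) (dd φhat hφhat _)]
    simp only [ContinuousLinearMap.add_apply, ContinuousLinearMap.smul_apply, smul_eq_mul]
  -- key5
  have key5 : (∑ i, fderiv ℝ (fun y =>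
        (∑ j, c y i j * fderiv ℝ p y (Pi.single j 1))
        + p y * ∑ j, fderiv ℝ (fun z => c z i j) y (Pi.single j 1)) x (Pi.single i 1))
      = p x * ((∑ i, ∑ j, ℓ x i * c x i j * fderiv ℝ φhat x (Pi.single j 1))
          + ∑ i, ∑ j, c x i j *
              fderiv ℝ (fun y => fderiv ℝ φhat y (Pi.single j 1)) x (Pi.single i 1)) := by
    rw [hHG]
    simp only [hHexp]
    -- A3 computation
    have hA3 : p x * (∑ i, ∑ j, ℓ x i * c x i j * fderiv ℝ φhat x (Pi.single j 1))
        = (∑ i, fderiv ℝ φhat x (Pi.single i 1)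
              * (∑ j, c x i j * fderiv ℝ p x (Pi.single j 1)))
          + p x * ∑ i, fderiv ℝ φhat x (Pi.single i 1)
              * (∑ j, fderiv ℝ (fun z => c z i j) x (Pi.single j 1)) := by
      have hsw : (∑ i, ∑ j, ℓ x i * c x i j * fderiv ℝ φhat x (Pi.single j 1))
          = ∑ i, fderiv ℝ φhat x (Pi.single i 1) * (∑ j, c x i j * ℓ x j) := by
        rw [Finset.sum_comm]
        refine Finset.sum_congr rfl fun i _ => ?_
        rw [Finset.mul_sum]
        refine Finset.sum_congr rfl fun j _ => ?_
        rw [hcs i j]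
        ring
      rw [hsw]
      rw [Finset.mul_sum, Finset.mul_sum, ← Finset.sum_add_distrib]
      refine Finset.sum_congr rfl fun i _ => ?_
      rw [hclv x hx i]
      have hpx : p x ≠ 0 := (hp_pos x hx).ne'
      field_simp
    -- match the two first-order-in-c terms
    have hqa : (∑ i, (∑ j, c x i j * fderiv ℝ φhat x (Pi.single j 1))
          * fderiv ℝ p x (Pi.single i 1))
        = ∑ i, fderiv ℝ φhat x (Pi.single i 1)
            * (∑ j, c x i j * fderiv ℝ p x (Pi.single j 1)) := by
      simp only [Finset.sum_mul, Finset.mul_sum]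
      rw [Finset.sum_comm]
      refine Finset.sum_congr rfl fun i _ => Finset.sum_congr rfl fun j _ => ?_
      rw [hcs i j]
      ring
    have hca : (∑ i, ∑ j, fderiv ℝ φhat x (Pi.single j 1)
          * fderiv ℝ (fun z => c z i j) x (Pi.single i 1))
        = ∑ i, fderiv ℝ φhat x (Pi.single i 1)
            * (∑ j, fderiv ℝ (fun z => c z i j) x (Pi.single j 1)) := by
      simp only [Finset.mul_sum]
      rw [Finset.sum_comm]
      refine Finset.sum_congr rfl fun i _ => Finset.sum_congr rfl fun j _ => ?_
      rw [hPc j i]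
    rw [Finset.sum_add_distrib, ← Finset.mul_sum]
    simp only [Finset.sum_add_distrib]
    rw [hqa, hca]
    linear_combination -hA3
  -- key6 : expansion of the quadratic form
  have hsym' : (∑ i, ∑ j, fderiv ℝ φhat x (Pi.single i 1) * c x i j * ℓ x j)
      = ∑ i, ∑ j, ℓ x i * c x i j * fderiv ℝ φhat x (Pi.single j 1) := by
    rw [Finset.sum_comm]
    refine Finset.sum_congr rfl fun i _ => Finset.sum_congr rfl fun j _ => ?_
    rw [hcs j i]
    ring
  have key6 : (∑ i, ∑ j, (fderiv ℝ φhat x (Pi.single i 1) - ℓ x i) * c x i j *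
        (fderiv ℝ φhat x (Pi.single j 1) - ℓ x j))
      = (∑ i, ∑ j, fderiv ℝ φhat x (Pi.single i 1) * c x i j
          * fderiv ℝ φhat x (Pi.single j 1))
        - 2 * (∑ i, ∑ j, ℓ x i * c x i j * fderiv ℝ φhat x (Pi.single j 1))
        + ∑ i, ∑ j, ℓ x i * c x i j * ℓ x j := by
    have h1 : (∑ i, ∑ j, (fderiv ℝ φhat x (Pi.single i 1) - ℓ x i) * c x i j *
          (fderiv ℝ φhat x (Pi.single j 1) - ℓ x j))
        = ∑ i, ∑ j, ((fderiv ℝ φhat x (Pi.single i 1) * c x i j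
              * fderiv ℝ φhat x (Pi.single j 1)
            - (ℓ x i * c x i j * fderiv ℝ φhat x (Pi.single j 1)
               + fderiv ℝ φhat x (Pi.single i 1) * c x i j * ℓ x j))
          + ℓ x i * c x i j * ℓ x j) :=
      Finset.sum_congr rfl fun i _ => Finset.sum_congr rfl fun j _ => by ring
    rw [h1]
    simp only [Finset.sum_add_distrib, Finset.sum_sub_distrib]
    rw [hsym']
    ring
  -- finish
  simp only [key1]
  rw [key5, key6]
  have hL : (∑ i, ∑ j, c x i j * (Real.exp (φhat x / 2) *
        (fderiv ℝ φhat x (Pi.single i 1) * fderiv ℝ φhat x (Pi.single j 1) / 4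
         + fderiv ℝ (fun y => fderiv ℝ φhat y (Pi.single j 1)) x (Pi.single i 1) / 2)))
      = Real.exp (φhat x / 2) *
        ((∑ i, ∑ j, fderiv ℝ φhat x (Pi.single i 1) * c x i j
            * fderiv ℝ φhat x (Pi.single j 1)) / 4
         + (∑ i, ∑ j, c x i j *
            fderiv ℝ (fun y => fderiv ℝ φhat y (Pi.single j 1)) x (Pi.single i 1)) / 2) := by
    rw [Finset.sum_div, Finset.sum_div, ← Finset.sum_add_distrib, Finset.mul_sum]
    refine Finset.sum_congr rfl fun i _ => ?_
    rw [Finset.sum_div, Finset.sum_div, ← Finset.sum_add_distrib, Finset.mul_sum]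
    refine Finset.sum_congr rfl fun j _ => ?_
    ring
  rw [hL]
  have hpx : p x ≠ 0 := (hp_pos x hx).ne'
  have hux : Real.exp (φhat x / 2) ≠ 0 := Real.exp_ne_zero _
  field_simp
  ring
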